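/- Let Q be a quiver whose underlying graph is a Dynkin diagram of type ADE, with Euler form ⟨−,−⟩ and Killing form (α,β) = ⟨α,β⟩ + ⟨β,α⟩. Let γ, β be positive roots (Schur roots) with β ≤ γ. If γ − β = α₁ ⊕ ⋯ ⊕ α_s is the Kac canonical decomposition of γ − β, then s ≤ 2 − (γ, β). -/

import Mathlib

/-- For a quiver of Dynkin type ADE, with positive definite Euler form `E` on dimension
vectors, Schur roots being the `α` with `E α α = 1`: if `β ≤ γ` are Schur (positive)
roots and `γ - β = α₁ ⊕ ⋯ ⊕ α_s` is the Kac canonical decomposition (the `αᵢ` are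
Schur roots with vanishing `ext`, so `E (αᵢ) (αⱼ) = hom(αᵢ, αⱼ) ≥ 0` for `i ≠ j`),
then `s ≤ 2 - (γ, β)` where `(γ, β) = E γ β + E β γ` is the Killing form. -/
theorem canonical_decomposition_length_le
    (n : ℕ) (E : LinearMap.BilinForm ℤ (Fin n → ℤ))
    (hposdef : ∀ x : Fin n → ℤ, x ≠ 0 → 0 < E x x)
    (β γ : Fin n → ℤ)
    (hβschur : E β β = 1) (hγschur : E γ γ = 1)
    (hβpos : ∀ i, 0 ≤ β i) (hγpos : ∀ i, 0 ≤ γ i)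
    (hle : ∀ i, β i ≤ γ i)
    (s : ℕ) (a : Fin s → (Fin n → ℤ))
    (hdec : γ - β = ∑ i, a i)
    (hschur : ∀ i, E (a i) (a i) = 1)
    (hhom : ∀ i j, i ≠ j → 0 ≤ E (a i) (a j)) :
    (s : ℤ) ≤ 2 - (E γ β + E β γ) := by
  have h1 : E (γ - β) (γ - β) = 2 - (E γ β + E β γ) := by
    simp only [map_sub, LinearMap.sub_apply]
    rw [hβschur, hγschur]; ring
  have h2 : E (γ - β) (γ - β) = ∑ i, ∑ j, E (a i) (a j) := by
    simp only [hdec, map_sum, LinearMap.coe_sum, Finset.sum_apply]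
    rw [Finset.sum_comm]
    
  have h3 : (s : ℤ) ≤ ∑ i, ∑ j, E (a i) (a j) := by
    have : ∀ i ∈ Finset.univ (α := Fin s), (1 : ℤ) ≤ ∑ j, E (a i) (a j) := by
      intro i _
      rw [← hschur i]
      refine Finset.single_le_sum (f := fun j => E (a i) (a j)) (fun j _ => ?_) (Finset.mem_univ i)
      rcases eq_or_ne i j with rfl | h
      · show 0 ≤ E (a _) (a _); rw [hschur]; norm_num
      · exact hhom i j h
    calc (s : ℤ) = ∑ _i : Fin s, (1 : ℤ) := by simp
      _ ≤ _ := Finset.sum_le_sum this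
  linarith [h1, h2, h3]
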